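/- Let p > 1 and let g ∈ W^{1,p}(0,1). Define (P_{D_ε} g)(x) = (1−ε)^{−1} g(x/(1−ε)) 1_{[0,1−ε]}(x) for ε ∈ (0,1/2). Then ‖g − P_{D_ε} g‖_{L^{2p}(0,1)} → 0 as ε → 0⁺. Moreover the convergence is uniform over the ball {g : ‖g‖_{W^{1,p}} ≤ M} for each fixed M > 0. -/

import Mathlib

open MeasureTheory Set

set_option maxHeartbeats 1000000

private lemma memLp_of_abs_rpow {p : ℝ} (hp : 0 < p) {f : ℝ → ℝ} {μ : Measure ℝ}
    (hm : AEStronglyMeasurable f μ) (hi : Integrable (fun t => |f t| ^ p) μ) :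
    MemLp f (ENNReal.ofReal p) μ := by
  refine ⟨hm, ?_⟩
  have h1 : MemLp (fun t => ‖f t‖ ^ p) 1 μ := by
    rw [memLp_one_iff_integrable]
    simpa [Real.norm_eq_abs] using hi
  have h2 := h1.2
  rw [eLpNorm_norm_rpow f hp, one_mul] at h2
  exact (ENNReal.rpow_lt_top_iff_of_pos hp).mp h2

private lemma holder_abs {p q : ℝ} (hpq : Real.HolderConjugate p q) {f : ℝ → ℝ} {s : Set ℝ}
    (hvol : volume s ≠ ⊤)
    (hm : AEStronglyMeasurable f (volume.restrict s))
    (hi : IntegrableOn (fun t => |f t| ^ p) s) :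
    ∫ t in s, |f t| ≤ (∫ t in s, |f t| ^ p) ^ (1/p) * (volume s).toReal ^ (1/q) := by
  haveI : IsFiniteMeasure (volume.restrict s) :=
    ⟨by rw [Measure.restrict_apply_univ]; exact hvol.lt_top⟩
  have hf : MemLp f (ENNReal.ofReal p) (volume.restrict s) := memLp_of_abs_rpow hpq.pos hm hi
  have hone : MemLp (fun _ : ℝ => (1:ℝ)) (ENNReal.ofReal q) (volume.restrict s) := memLp_const 1
  have h := integral_mul_norm_le_Lp_mul_Lq hpq hf hone
  simpa [Real.norm_eq_abs, Real.one_rpow, integral_const, Measure.restrict_apply_univ,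
    smul_eq_mul, mul_one, Measure.real] using h

/-- The transfer operator `P_{D_ε}` of `D_ε(x) = (1-ε)x` converges to the identity in
`L^{2p}`: `‖g - P_{D_ε} g‖_{L^{2p}(0,1)} → 0` as `ε → 0⁺`, uniformly over the ball
`‖g‖_{W^{1,p}} ≤ M`. -/
theorem transfer_rescaling_L2p_convergence (p M : ℝ) (hp : 1 < p) (hM : 0 < M) :
    ∀ δ > 0, ∃ ε₀ > 0, ∀ ε : ℝ, 0 < ε → ε < ε₀ → ε < 1/2 →
      ∀ g g' : ℝ → ℝ, ContinuousOn g (Set.Icc (0:ℝ) 1) →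
        (∀ x ∈ Set.Icc (0:ℝ) 1, g x = g 0 + ∫ t in (0:ℝ)..x, g' t) →
        MeasureTheory.IntegrableOn g' (Set.Icc (0:ℝ) 1) →
        MeasureTheory.IntegrableOn (fun t => |g t| ^ p) (Set.Icc (0:ℝ) 1) →
        MeasureTheory.IntegrableOn (fun t => |g' t| ^ p) (Set.Icc (0:ℝ) 1) →
        (∫ t in Set.Icc (0:ℝ) 1, |g t| ^ p) ^ (1/p)
          + (∫ t in Set.Icc (0:ℝ) 1, |g' t| ^ p) ^ (1/p) ≤ M →
        (∫ x in Set.Icc (0:ℝ) 1,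
            |g x - (if x ≤ 1-ε then (1-ε)⁻¹ * g (x/(1-ε)) else 0)| ^ (2*p)) ^ (1/(2*p)) ≤ δ := by
  have hp0 : (0:ℝ) < p := lt_trans one_pos hp
  set q : ℝ := p / (p - 1) with hqdef
  have hpq : Real.HolderConjugate p q := Real.HolderConjugate.conjExponent hp
  set α : ℝ := 1 - 1/p with hαdef
  have hα0 : 0 < α := by
    have : 1/p < 1 := by rw [div_lt_one hp0]; exact hp
    simp only [hαdef]; linarith
  have hα1 : α ≤ 1 := by
    have : 0 < 1/p := by positivity
    simp only [hαdef]; linarith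
  have hαq : α = 1/q := by
    have := hpq.one_sub_inv
    simp only [hαdef, one_div]
    linarith [this]
  set K : ℝ := (5*M)^(2*p) + (2*M)^(2*p) with hKdef
  have hKpos : 0 < K := by positivity
  intro δ hδ
  refine ⟨(1/2) * min 1 ((δ^(2*p)/K) ^ α⁻¹), by positivity, ?_⟩
  intro ε hε hεε₀ hε2 g g' hgc hftc hg'i hgp hg'p hball
  have h2ε : 2*ε ≤ 1 := by linarith
  have h2ε0 : 0 < 2*ε := by linarith
  have hε1 : (0:ℝ) < 1 - ε := by linarith
  -- basic nonnegativity of the Lᵖ integrals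
  have hIg : 0 ≤ ∫ t in Icc (0:ℝ) 1, |g t| ^ p :=
    setIntegral_nonneg measurableSet_Icc fun t _ => Real.rpow_nonneg (abs_nonneg _) _
  have hIg' : 0 ≤ ∫ t in Icc (0:ℝ) 1, |g' t| ^ p :=
    setIntegral_nonneg measurableSet_Icc fun t _ => Real.rpow_nonneg (abs_nonneg _) _
  have hgM : (∫ t in Icc (0:ℝ) 1, |g t| ^ p) ^ (1/p) ≤ M := by
    have := Real.rpow_nonneg hIg' (1/p); linarith
  have hg'M : (∫ t in Icc (0:ℝ) 1, |g' t| ^ p) ^ (1/p) ≤ M := by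
    have := Real.rpow_nonneg hIg (1/p); linarith
  -- Hölder continuity of g, one-sided version
  have key : ∀ x ∈ Icc (0:ℝ) 1, ∀ y ∈ Icc (0:ℝ) 1, y ≤ x → |g x - g y| ≤ M * (x - y) ^ α := by
    intro x hx y hy hyx
    have hsub : Ioc y x ⊆ Icc (0:ℝ) 1 :=
      fun t ht => ⟨le_trans hy.1 (le_of_lt ht.1), le_trans ht.2 hx.2⟩
    have hix : IntervalIntegrable g' volume 0 x := by
      apply IntegrableOn.intervalIntegrable
      apply hg'i.mono_set
      rw [uIcc_of_le hx.1]
      exact Icc_subset_Icc le_rfl hx.2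
    have hiy : IntervalIntegrable g' volume 0 y := by
      apply IntegrableOn.intervalIntegrable
      apply hg'i.mono_set
      rw [uIcc_of_le hy.1]
      exact Icc_subset_Icc le_rfl hy.2
    have h1 : g x - g y = ∫ t in y..x, g' t := by
      rw [hftc x hx, hftc y hy]
      have := intervalIntegral.integral_interval_sub_left hix hiy
      rw [← this]; ring
    have h2 : |g x - g y| ≤ ∫ t in Ioc y x, |g' t| := by
      rw [h1, show (∫ t in Ioc y x, |g' t|) = ∫ t in y..x, |g' t| from
        (intervalIntegral.integral_of_le hyx).symm]
      simpa [Real.norm_eq_abs] using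
        intervalIntegral.norm_integral_le_integral_norm (μ := volume) (f := g') hyx
    have h3 : ∫ t in Ioc y x, |g' t| ≤
        (∫ t in Ioc y x, |g' t| ^ p) ^ (1/p) * ((volume (Ioc y x)).toReal) ^ (1/q) := by
      apply holder_abs hpq
      · rw [Real.volume_Ioc]; exact ENNReal.ofReal_ne_top
      · exact (hg'i.mono_set hsub).aestronglyMeasurable
      · exact hg'p.mono_set hsub
    have h4 : ∫ t in Ioc y x, |g' t| ^ p ≤ ∫ t in Icc (0:ℝ) 1, |g' t| ^ p :=
      setIntegral_mono_set hg'p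
        (ae_of_all _ fun t => Real.rpow_nonneg (abs_nonneg _) _)
        (HasSubset.Subset.eventuallyLE hsub)
    have hIyx : 0 ≤ ∫ t in Ioc y x, |g' t| ^ p :=
      setIntegral_nonneg measurableSet_Ioc fun t _ => Real.rpow_nonneg (abs_nonneg _) _
    have hvol : (volume (Ioc y x)).toReal = x - y := by
      rw [Real.volume_Ioc, ENNReal.toReal_ofReal (by linarith)]
    calc |g x - g y| ≤ (∫ t in Ioc y x, |g' t| ^ p) ^ (1/p) * ((volume (Ioc y x)).toReal) ^ (1/q) :=
          le_trans h2 h3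
      _ ≤ (∫ t in Icc (0:ℝ) 1, |g' t| ^ p) ^ (1/p) * (x - y) ^ (1/q) := by
          rw [hvol]
          exact mul_le_mul_of_nonneg_right (Real.rpow_le_rpow hIyx h4 (by positivity))
            (Real.rpow_nonneg (by linarith) _)
      _ ≤ M * (x - y) ^ α := by
          rw [hαq]
          exact mul_le_mul_of_nonneg_right hg'M (Real.rpow_nonneg (by linarith) _)
  -- Hölder continuity, symmetric version
  have hHold : ∀ x ∈ Icc (0:ℝ) 1, ∀ y ∈ Icc (0:ℝ) 1, |g x - g y| ≤ M * |x - y| ^ α := by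
    intro x hx y hy
    rcases le_total y x with h | h
    · rw [abs_of_nonneg (sub_nonneg.2 h)]; exact key x hx y hy h
    · rw [abs_sub_comm (g x), abs_sub_comm x, abs_of_nonneg (sub_nonneg.2 h)]
      exact key y hy x hx h
  -- sup bound on |g|
  have hsup : ∀ x ∈ Icc (0:ℝ) 1, |g x| ≤ 2*M := by
    obtain ⟨y₀, hy₀, hminOn⟩ := isCompact_Icc.exists_isMinOn
      (nonempty_Icc.2 (by norm_num : (0:ℝ) ≤ 1)) hgc.abs
    have hy₀M : |g y₀| ≤ M := by
      have hconst : IntegrableOn (fun _ : ℝ => |g y₀| ^ p) (Icc (0:ℝ) 1) :=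
        integrableOn_const measure_Icc_lt_top.ne
      have h1 : |g y₀| ^ p ≤ ∫ t in Icc (0:ℝ) 1, |g t| ^ p := by
        have he : |g y₀| ^ p = ∫ _t in Icc (0:ℝ) 1, |g y₀| ^ p := by
          rw [setIntegral_const, Real.volume_real_Icc]
          norm_num
        rw [he]
        exact setIntegral_mono_on hconst hgp measurableSet_Icc
          (fun t ht => Real.rpow_le_rpow (abs_nonneg _) (isMinOn_iff.mp hminOn t ht) hp0.le)
      calc |g y₀| = (|g y₀| ^ p) ^ (1/p) := by
            rw [one_div, Real.rpow_rpow_inv (abs_nonneg _) hp0.ne']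
        _ ≤ (∫ t in Icc (0:ℝ) 1, |g t| ^ p) ^ (1/p) :=
            Real.rpow_le_rpow (Real.rpow_nonneg (abs_nonneg _) _) h1 (by positivity)
        _ ≤ M := hgM
    intro x hx
    have h1 := hHold x hx y₀ hy₀
    have h2 : |x - y₀| ^ α ≤ 1 := by
      apply Real.rpow_le_one (abs_nonneg _) _ hα0.le
      rw [abs_le]
      constructor <;> [linarith [hx.1, hy₀.2]; linarith [hx.2, hy₀.1]]
    have h3 : M * |x - y₀| ^ α ≤ M := mul_le_of_le_one_right hM.le h2
    have h4 := abs_sub_abs_le_abs_sub (g x) (g y₀)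
    linarith
  -- pointwise estimate on [0, 1-ε]
  set C : ℝ := 5*M*(2*ε)^α with hCdef
  have hC0 : 0 ≤ C := by positivity
  have h2εα : 2*ε ≤ (2*ε)^α := by
    nth_rewrite 1 [← Real.rpow_one (2*ε)]
    exact Real.rpow_le_rpow_of_exponent_ge h2ε0 h2ε hα1
  have hptA : ∀ x ∈ Icc (0:ℝ) 1, x ≤ 1 - ε → |g x - (1-ε)⁻¹ * g (x/(1-ε))| ≤ C := by
    intro x hx hxε
    set y : ℝ := x/(1-ε) with hydef
    have hy01 : y ∈ Icc (0:ℝ) 1 := ⟨div_nonneg hx.1 hε1.le, (div_le_one hε1).2 (by linarith)⟩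
    have hyx : y - x = x*ε/(1-ε) := by
      rw [hydef]; field_simp; ring
    have hyx0 : 0 ≤ y - x := by
      rw [hyx]; exact div_nonneg (mul_nonneg hx.1 hε.le) hε1.le
    have hxy : |x - y| ≤ 2*ε := by
      rw [abs_sub_comm, abs_of_nonneg hyx0, hyx, div_le_iff₀ hε1]
      nlinarith [hx.1]
    have hinv1 : (1:ℝ) ≤ (1-ε)⁻¹ := by
      rw [le_inv_comm₀] <;> linarith
    have hinv : (1-ε)⁻¹ - 1 ≤ 2*ε := by
      have he : (1-ε)⁻¹ - 1 = ε/(1-ε) := by field_simp; ring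
      rw [he, div_le_iff₀ hε1]
      nlinarith
    have htri : |g x - (1-ε)⁻¹ * g y| ≤ |g x - g y| + ((1-ε)⁻¹ - 1) * |g y| := by
      have h6 : g x - (1-ε)⁻¹ * g y = (g x - g y) + (-(((1-ε)⁻¹ - 1) * g y)) := by ring
      rw [h6]
      refine (abs_add_le _ _).trans ?_
      rw [abs_neg, abs_mul, abs_of_nonneg (by linarith : (0:ℝ) ≤ (1-ε)⁻¹ - 1)]
    have hb1 : |g x - g y| ≤ M * (2*ε)^α := by
      refine (hHold x hx y hy01).trans ?_
      exact mul_le_mul_of_nonneg_left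
        (Real.rpow_le_rpow (abs_nonneg _) hxy hα0.le) hM.le
    have hb2 : ((1-ε)⁻¹ - 1) * |g y| ≤ (2*ε) * (2*M) :=
      mul_le_mul hinv (hsup y hy01) (abs_nonneg _) (by linarith)
    have hb3 : (2*ε) * (2*M) ≤ (2*ε)^α * (2*M) :=
      mul_le_mul_of_nonneg_right h2εα (by linarith)
    have : M * (2*ε)^α + (2*ε)^α * (2*M) ≤ C := by
      rw [hCdef]
      nlinarith [Real.rpow_nonneg h2ε0.le α, hM.le]
    linarith [htri.trans (by linarith : |g x - g y| + ((1-ε)⁻¹ - 1) * |g y| ≤ M * (2*ε)^α + (2*ε)^α * (2*M))]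
  -- the dominating step function
  set B : ℝ → ℝ := fun x => if x ≤ 1-ε then C^(2*p) else (2*M)^(2*p) with hBdef
  have hsplit : Icc (0:ℝ) 1 = Icc 0 (1-ε) ∪ Ioc (1-ε) 1 :=
    (Icc_union_Ioc_eq_Icc (by linarith) (by linarith)).symm
  have hBint1 : IntegrableOn B (Icc (0:ℝ) (1-ε)) := by
    have hc1 : IntegrableOn (fun _ : ℝ => C^(2*p)) (Icc (0:ℝ) (1-ε)) volume := by
      refine integrableOn_const ?_
      exact measure_Icc_lt_top.ne
    exact hc1.congr_fun (fun x hx => by simp only [hBdef, if_pos hx.2]) measurableSet_Icc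
  have hBint2 : IntegrableOn B (Ioc (1-ε) (1:ℝ)) := by
    have hc2 : IntegrableOn (fun _ : ℝ => (2*M)^(2*p)) (Ioc (1-ε) (1:ℝ)) volume := by
      refine integrableOn_const ?_
      exact measure_Ioc_lt_top.ne
    exact hc2.congr_fun (fun x hx => by simp only [hBdef, if_neg (not_le.2 hx.1)])
      measurableSet_Ioc
  have hBint : IntegrableOn B (Icc (0:ℝ) 1) := by
    rw [hsplit]; exact hBint1.union hBint2
  have hdisj : Disjoint (Icc (0:ℝ) (1-ε)) (Ioc (1-ε) (1:ℝ)) := by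
    rw [Set.disjoint_left]
    intro a ha1 ha2
    exact absurd ha1.2 (not_le.2 ha2.1)
  -- integral bound
  have hIle : (∫ x in Icc (0:ℝ) 1,
      |g x - (if x ≤ 1-ε then (1-ε)⁻¹ * g (x/(1-ε)) else 0)| ^ (2*p)) ≤
      ∫ x in Icc (0:ℝ) 1, B x := by
    apply integral_mono_of_nonneg
    · exact ae_of_all _ fun x => Real.rpow_nonneg (abs_nonneg _) _
    · exact hBint
    · refine (ae_restrict_iff' measurableSet_Icc).2 (ae_of_all _ fun x hx => ?_)
      by_cases hxε : x ≤ 1-ε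
      · simp only [hBdef, if_pos hxε]
        exact Real.rpow_le_rpow (abs_nonneg _) (hptA x hx hxε) (by positivity)
      · simp only [hBdef, if_neg hxε]
        refine Real.rpow_le_rpow (abs_nonneg _) ?_ (by positivity)
        simpa using hsup x hx
  have hBval : ∫ x in Icc (0:ℝ) 1, B x ≤ C^(2*p) + (2*M)^(2*p) * ε := by
    rw [hsplit, setIntegral_union hdisj measurableSet_Ioc hBint1 hBint2]
    have e1 : ∫ x in Icc (0:ℝ) (1-ε), B x = (1-ε) * C^(2*p) := by
      rw [setIntegral_congr_fun measurableSet_Icc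
        (fun x hx => by simp only [hBdef, if_pos hx.2] :
          EqOn B (fun _ => C^(2*p)) (Icc (0:ℝ) (1-ε)))]
      rw [setIntegral_const, Real.volume_real_Icc_of_le (by linarith), smul_eq_mul]
      ring_nf
    have e2 : ∫ x in Ioc (1-ε) (1:ℝ), B x = ε * (2*M)^(2*p) := by
      rw [setIntegral_congr_fun measurableSet_Ioc
        (fun x hx => by simp only [hBdef, if_neg (not_le.2 hx.1)] :
          EqOn B (fun _ => (2*M)^(2*p)) (Ioc (1-ε) (1:ℝ)))]
      rw [setIntegral_const, Real.volume_real_Ioc_of_le (by linarith), smul_eq_mul]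
      ring_nf
    rw [e1, e2]
    have hC2p : 0 ≤ C^(2*p) := Real.rpow_nonneg hC0 _
    nlinarith
  -- arithmetic
  have hCval : C^(2*p) ≤ (5*M)^(2*p) * (2*ε)^α := by
    have he : C^(2*p) = (5*M)^(2*p) * ((2*ε)^α)^(2*p) := by
      rw [hCdef, Real.mul_rpow (by positivity) (Real.rpow_nonneg h2ε0.le _)]
    rw [he]
    apply mul_le_mul_of_nonneg_left _ (by positivity)
    rw [← Real.rpow_mul h2ε0.le]
    exact Real.rpow_le_rpow_of_exponent_ge h2ε0 h2ε (by nlinarith)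
  have hεα : ε ≤ (2*ε)^α := by linarith
  have hfinal : C^(2*p) + (2*M)^(2*p) * ε ≤ K * (2*ε)^α := by
    have h7 : (2*M)^(2*p) * ε ≤ (2*M)^(2*p) * (2*ε)^α :=
      mul_le_mul_of_nonneg_left hεα (by positivity)
    rw [hKdef]
    nlinarith
  have hKε : K * (2*ε)^α ≤ δ^(2*p) := by
    have h2εlt : 2*ε ≤ (δ^(2*p)/K) ^ α⁻¹ := by
      have h8 := min_le_right 1 ((δ^(2*p)/K) ^ α⁻¹)
      linarith
    have h9 : (2*ε)^α ≤ ((δ^(2*p)/K) ^ α⁻¹)^α := Real.rpow_le_rpow h2ε0.le h2εlt hα0.le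
    rw [Real.rpow_inv_rpow (by positivity) hα0.ne'] at h9
    calc K * (2*ε)^α ≤ K * (δ^(2*p)/K) := mul_le_mul_of_nonneg_left h9 hKpos.le
      _ = δ^(2*p) := by field_simp
  have hInn : 0 ≤ ∫ x in Icc (0:ℝ) 1,
      |g x - (if x ≤ 1-ε then (1-ε)⁻¹ * g (x/(1-ε)) else 0)| ^ (2*p) :=
    setIntegral_nonneg measurableSet_Icc fun x _ => Real.rpow_nonneg (abs_nonneg _) _
  have hIδ : (∫ x in Icc (0:ℝ) 1,
      |g x - (if x ≤ 1-ε then (1-ε)⁻¹ * g (x/(1-ε)) else 0)| ^ (2*p)) ≤ δ^(2*p) :=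
    hIle.trans (hBval.trans (hfinal.trans hKε))
  calc (∫ x in Icc (0:ℝ) 1,
      |g x - (if x ≤ 1-ε then (1-ε)⁻¹ * g (x/(1-ε)) else 0)| ^ (2*p)) ^ (1/(2*p))
      ≤ (δ^(2*p))^(1/(2*p)) := Real.rpow_le_rpow hInn hIδ (by positivity)
    _ = δ := by rw [one_div, Real.rpow_rpow_inv hδ.le (by positivity)]
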